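/- The number of surjective homomorphisms from the free group F_n onto the dihedral group D_{2m} of order 2m is (2^n − 1) · m^n · Π_{i=1}^{r} (1 − q_i^{1−n}), where q_1,…,q_r are the distinct prime divisors of m. -/

import Mathlib

open Finset

/-- The generation condition for a tuple in `ZMod m`, phrased via prime factors. -/
def ZModCond {ι : Type*} (m : ℕ) (c : ι → ZMod m) : Prop :=
  ∀ q ∈ m.primeFactors, ∃ i, ¬ (q ∣ (c i).val)

lemma zmodCond_comp_equiv {ι ι' : Type*} (e : ι' ≃ ι) (m : ℕ) (c : ι → ZMod m) :
    ZModCond m (c ∘ e) ↔ ZModCond m c :=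
  forall₂_congr fun _ _ =>
    ⟨fun ⟨i, hi⟩ => ⟨e i, hi⟩, fun ⟨i, hi⟩ => ⟨e.symm i, by simpa using hi⟩⟩

/-- Elements of `ZMod N` with value divisible by `p` biject with `ZMod (N / p)`. -/
def zmodDvdEquiv' (N p : ℕ) (hN : N ≠ 0) (hp : 0 < p) (h : p ∣ N) :
    {x : ZMod N // p ∣ x.val} ≃ ZMod (N / p) where
  toFun x := ((x.1.val / p : ℕ) : ZMod (N / p))
  invFun y := ⟨((p * y.val : ℕ) : ZMod N), by
    haveI : NeZero N := ⟨hN⟩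
    have hKpos : 0 < N / p := Nat.div_pos (Nat.le_of_dvd (Nat.pos_of_ne_zero hN) h) hp
    haveI : NeZero (N / p) := ⟨hKpos.ne'⟩
    have hy : y.val < N / p := ZMod.val_lt y
    have hlt : p * y.val < N := by
      calc p * y.val < p * (N / p) := by exact (Nat.mul_lt_mul_left hp).mpr hy
      _ = N := Nat.mul_div_cancel' h
    rw [ZMod.val_natCast, Nat.mod_eq_of_lt hlt]
    exact Dvd.intro _ rfl⟩
  left_inv := by
    rintro ⟨x, hx⟩
    haveI : NeZero N := ⟨hN⟩
    have hKpos : 0 < N / p := Nat.div_pos (Nat.le_of_dvd (Nat.pos_of_ne_zero hN) h) hp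
    haveI : NeZero (N / p) := ⟨hKpos.ne'⟩
    have h1 : x.val / p < N / p := Nat.div_lt_div_of_lt_of_dvd h (ZMod.val_lt x)
    ext
    simp only
    rw [ZMod.val_natCast, Nat.mod_eq_of_lt h1, Nat.mul_div_cancel' hx, ZMod.natCast_val,
      ZMod.cast_id]
  right_inv := by
    intro y
    haveI : NeZero N := ⟨hN⟩
    have hKpos : 0 < N / p := Nat.div_pos (Nat.le_of_dvd (Nat.pos_of_ne_zero hN) h) hp
    haveI : NeZero (N / p) := ⟨hKpos.ne'⟩
    have hy : y.val < N / p := ZMod.val_lt y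
    have hlt : p * y.val < N := by
      calc p * y.val < p * (N / p) := by exact (Nat.mul_lt_mul_left hp).mpr hy
      _ = N := Nat.mul_div_cancel' h
    simp only
    rw [ZMod.val_natCast, Nat.mod_eq_of_lt hlt, Nat.mul_div_cancel_left _ hp,
      ZMod.natCast_val, ZMod.cast_id]

def zmodDvdEquiv (K p : ℕ) (hK : K ≠ 0) (hp : 0 < p) :
    {x : ZMod (p * K) // p ∣ x.val} ≃ ZMod K :=
  have hN : p * K ≠ 0 := by positivity
  have h : p ∣ p * K := dvd_mul_right p K
  have hNK : p * K / p = K := Nat.mul_div_cancel_left K hp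
  (zmodDvdEquiv' (p * K) p hN hp h).trans (by rw [hNK])


lemma nat_dvd_mod_iff {q a x : ℕ} (h : q ∣ a) : q ∣ x % a ↔ q ∣ x := by
  constructor
  · intro hx
    have := Nat.mod_add_div x a
    calc q ∣ x % a + a * (x / a) := Nat.dvd_add hx (Dvd.dvd.mul_right h _)
    _ = x := this
  · intro hx
    have := Nat.mod_add_div x a
    have : x % a = x - a * (x / a) := by omega
    rw [this]
    exact Nat.dvd_sub hx (Dvd.dvd.mul_right h _)

lemma zmod_count (ι : Type*) [Fintype ι] :
    ∀ m : ℕ, m ≠ 0 →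
      (Nat.card {c : ι → ZMod m // ZModCond m c} : ℚ) =
        (m : ℚ) ^ (Fintype.card ι) *
          ∏ q ∈ m.primeFactors, (1 - (q : ℚ) ^ (-(Fintype.card ι : ℤ))) := by
  intro m
  induction m using Nat.recOnPosPrimePosCoprime with
  | prime_pow p e hpprime he =>
    intro _
    classical
    obtain ⟨e', rfl⟩ : ∃ e', e = e' + 1 := ⟨e - 1, by omega⟩
    have hpn : p.Prime := hpprime
    have hp1 : 1 < p := hpn.one_lt
    have hN0 : p ^ (e' + 1) ≠ 0 := by positivity
    haveI : NeZero (p ^ (e' + 1)) := ⟨hN0⟩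
    set k := Fintype.card ι with hk
    have hpf : (p ^ (e' + 1)).primeFactors = {p} :=
      Nat.primeFactors_prime_pow (Nat.succ_ne_zero e') hpn
    have hcondiff : ∀ c : ι → ZMod (p ^ (e' + 1)),
        ZModCond (p ^ (e' + 1)) c ↔ ¬ ∀ i, p ∣ (c i).val := by
      intro c
      unfold ZModCond
      rw [hpf]
      simp [not_forall]
    have hbad : Fintype.card {c : ι → ZMod (p ^ (e' + 1)) // ∀ i, p ∣ (c i).val}
        = (p ^ e') ^ k := by
      rw [Fintype.card_congr (Equiv.subtypePiEquivPi
        (p := fun (_ : ι) (x : ZMod (p ^ (e' + 1))) => p ∣ x.val))]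
      rw [Fintype.card_pi]
      have hone : ∀ _i : ι, Fintype.card {x : ZMod (p ^ (e' + 1)) // p ∣ x.val} = p ^ e' := by
        intro _i
        haveI : NeZero (p ^ e') := ⟨by positivity⟩
        have he2 : {x : ZMod (p ^ (e' + 1)) // p ∣ x.val} ≃ ZMod (p ^ e') := by
          rw [pow_succ']
          exact zmodDvdEquiv (p ^ e') p (by positivity) (by omega)
        rw [Fintype.card_congr he2, ZMod.card]
      rw [Finset.prod_congr rfl (fun i _ => hone i), Finset.prod_const]
      simp [hk]
    have hgood : Nat.card {c : ι → ZMod (p ^ (e' + 1)) // ZModCond (p ^ (e' + 1)) c}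
        = (p ^ (e' + 1)) ^ k - (p ^ e') ^ k := by
      rw [Nat.card_eq_fintype_card]
      rw [Fintype.card_congr (Equiv.subtypeEquivRight hcondiff)]
      rw [Fintype.card_subtype_compl, hbad, Fintype.card_fun, ZMod.card]
    rw [hgood, hpf, Finset.prod_singleton]
    have hle : (p ^ e') ^ k ≤ (p ^ (e' + 1)) ^ k :=
      Nat.pow_le_pow_left (Nat.pow_le_pow_right hp1.le (Nat.le_succ e')) _
    rw [Nat.cast_sub hle]
    push_cast
    have hP0 : (p : ℚ) ≠ 0 := by positivity
    have hPk : (p : ℚ) ^ k ≠ 0 := by positivity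
    have key : ((p : ℚ) ^ e') ^ k * (p : ℚ) ^ k = ((p : ℚ) ^ (e' + 1)) ^ k := by
      rw [← pow_mul, ← pow_mul, ← pow_add]
      congr 1
      ring
    rw [zpow_neg, zpow_natCast, ← key, mul_sub, mul_one, mul_assoc, mul_inv_cancel₀ hPk,
      mul_one]
  | zero => exact fun h => absurd rfl h
  | one =>
    intro _
    have hall : ∀ c : ι → ZMod 1, ZModCond 1 c := by
      intro c q hq
      simp at hq
    rw [Nat.card_congr (Equiv.subtypeUnivEquiv hall)]
    simp [Nat.card_eq_fintype_card]
  | coprime a b ha hb hab iha ihb =>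
    intro _
    have ha0 : a ≠ 0 := by omega
    have hb0 : b ≠ 0 := by omega
    haveI : NeZero (a * b) := ⟨by positivity⟩
    haveI : NeZero a := ⟨ha0⟩
    haveI : NeZero b := ⟨hb0⟩
    set e1 := ZMod.chineseRemainder hab with he1
    -- key component fact
    have hcomp1 : ∀ (x : ZMod (a * b)) (q : ℕ), q ∣ a → (q ∣ ((e1 x).1.val) ↔ q ∣ x.val) := by
      intro x q hq
      have hx : ((x.val : ℕ) : ZMod (a * b)) = x := by
        rw [ZMod.natCast_val, ZMod.cast_id]
      have : (e1 x).1 = ((x.val : ℕ) : ZMod a) := by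
        rw [← hx, map_natCast e1 x.val]
        simp
      rw [this, ZMod.val_natCast]
      exact nat_dvd_mod_iff hq
    have hcomp2 : ∀ (x : ZMod (a * b)) (q : ℕ), q ∣ b → (q ∣ ((e1 x).2.val) ↔ q ∣ x.val) := by
      intro x q hq
      have hx : ((x.val : ℕ) : ZMod (a * b)) = x := by
        rw [ZMod.natCast_val, ZMod.cast_id]
      have : (e1 x).2 = ((x.val : ℕ) : ZMod b) := by
        rw [← hx, map_natCast e1 x.val]
        simp
      rw [this, ZMod.val_natCast]
      exact nat_dvd_mod_iff hq
    set E : (ι → ZMod (a * b)) ≃ (ι → ZMod a) × (ι → ZMod b) :=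
      (Equiv.arrowCongr (Equiv.refl ι) e1.toEquiv).trans (Equiv.arrowProdEquivProdArrow _ _ _)
      with hE
    have hEfst : ∀ (c : ι → ZMod (a * b)) (i : ι), (E c).1 i = (e1 (c i)).1 := fun _ _ => rfl
    have hEsnd : ∀ (c : ι → ZMod (a * b)) (i : ι), (E c).2 i = (e1 (c i)).2 := fun _ _ => rfl
    have hcond : ∀ c : ι → ZMod (a * b),
        ZModCond (a * b) c ↔ ZModCond a (E c).1 ∧ ZModCond b (E c).2 := by
      intro c
      constructor
      · intro h
        constructor
        · intro q hq
          obtain ⟨i, hi⟩ := h q (by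
            rw [Nat.Coprime.primeFactors_mul hab]; exact Finset.mem_union_left _ hq)
          exact ⟨i, fun hd => hi ((hcomp1 (c i) q (Nat.dvd_of_mem_primeFactors hq)).mp
            (by rwa [hEfst] at hd))⟩
        · intro q hq
          obtain ⟨i, hi⟩ := h q (by
            rw [Nat.Coprime.primeFactors_mul hab]; exact Finset.mem_union_right _ hq)
          exact ⟨i, fun hd => hi ((hcomp2 (c i) q (Nat.dvd_of_mem_primeFactors hq)).mp
            (by rwa [hEsnd] at hd))⟩
      · rintro ⟨h1, h2⟩ q hq
        rw [Nat.Coprime.primeFactors_mul hab, Finset.mem_union] at hq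
        rcases hq with hq | hq
        · obtain ⟨i, hi⟩ := h1 q hq
          refine ⟨i, fun hd => hi ?_⟩
          rw [hEfst]
          exact (hcomp1 (c i) q (Nat.dvd_of_mem_primeFactors hq)).mpr hd
        · obtain ⟨i, hi⟩ := h2 q hq
          refine ⟨i, fun hd => hi ?_⟩
          rw [hEsnd]
          exact (hcomp2 (c i) q (Nat.dvd_of_mem_primeFactors hq)).mpr hd
    have hcard : Nat.card {c : ι → ZMod (a * b) // ZModCond (a * b) c} =
        Nat.card {c : ι → ZMod a // ZModCond a c} * Nat.card {c : ι → ZMod b // ZModCond b c} := by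
      rw [← Nat.card_prod]
      exact Nat.card_congr ((Equiv.subtypeEquiv E hcond).trans (Equiv.subtypeProdEquivProd))
    rw [hcard, Nat.cast_mul, iha ha0, ihb hb0, Nat.Coprime.primeFactors_mul hab,
      Finset.prod_union (Nat.Coprime.disjoint_primeFactors hab), Nat.cast_mul, mul_pow]
    ring

lemma nat_gcd_cast_mem {m : ℕ} {A B : ℕ} {H : AddSubgroup (ZMod m)}
    (hA : (A : ZMod m) ∈ H) (hB : (B : ZMod m) ∈ H) :
    ((Nat.gcd A B : ℕ) : ZMod m) ∈ H := by
  have hbez : ((Nat.gcd A B : ℕ) : ZMod m) =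
      (Nat.gcdA A B) • (A : ZMod m) + (Nat.gcdB A B) • (B : ZMod m) := by
    have h := Nat.gcd_eq_gcd_ab A B
    calc ((Nat.gcd A B : ℕ) : ZMod m) = (((Nat.gcd A B : ℤ)) : ZMod m) := by push_cast; ring
    _ = (((A : ℤ) * Nat.gcdA A B + (B : ℤ) * Nat.gcdB A B : ℤ) : ZMod m) := by rw [← h]
    _ = _ := by push_cast; rw [zsmul_eq_mul, zsmul_eq_mul]; ring
  rw [hbez]
  exact AddSubgroup.add_mem _ (AddSubgroup.zsmul_mem _ hA _) (AddSubgroup.zsmul_mem _ hB _)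

lemma gcd_cast_mem_closure {ι : Type*} [DecidableEq ι] (m : ℕ) (f : ι → ℕ) (s : Finset ι) :
    ((s.gcd f : ℕ) : ZMod m) ∈ AddSubgroup.closure ((fun i => ((f i : ℕ) : ZMod m)) '' s) := by
  induction s using Finset.induction_on with
  | empty => simp
  | @insert a s ha ih =>
    rw [Finset.gcd_insert, Finset.coe_insert]
    have hg : (gcd (f a) (s.gcd f) : ℕ) = Nat.gcd (f a) (s.gcd f) := gcd_eq_nat_gcd _ _
    rw [hg]
    have hmem1 : ((f a : ℕ) : ZMod m) ∈
        AddSubgroup.closure ((fun i => ((f i : ℕ) : ZMod m)) '' (insert a (s : Set ι))) :=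
      AddSubgroup.subset_closure ⟨a, Set.mem_insert a _, rfl⟩
    have hmem2 : ((s.gcd f : ℕ) : ZMod m) ∈
        AddSubgroup.closure ((fun i => ((f i : ℕ) : ZMod m)) '' (insert a (s : Set ι))) :=
      AddSubgroup.closure_mono (Set.image_mono (Set.subset_insert a _)) ih
    exact nat_gcd_cast_mem hmem1 hmem2

lemma closure_eq_top_iff_zmodCond {ι : Type*} [Fintype ι] [DecidableEq ι] (m : ℕ) [NeZero m]
    (c : ι → ZMod m) :
    AddSubgroup.closure (Set.range c) = ⊤ ↔ ZModCond m c := by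
  set g := Finset.univ.gcd (fun i => (c i).val) with hgdef
  have hfun : (fun i => (((fun j => (c j).val) i : ℕ) : ZMod m)) = c := by
    funext i
    rw [ZMod.natCast_val, ZMod.cast_id]
  have step1 : AddSubgroup.closure (Set.range c) = AddSubgroup.closure {((g : ℕ) : ZMod m)} := by
    apply le_antisymm
    · rw [AddSubgroup.closure_le]
      rintro _ ⟨i, rfl⟩
      obtain ⟨t, ht⟩ : g ∣ (c i).val := Finset.gcd_dvd (Finset.mem_univ i)
      rw [SetLike.mem_coe, AddSubgroup.mem_closure_singleton]
      refine ⟨(t : ℤ), ?_⟩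
      rw [zsmul_eq_mul]
      push_cast
      rw [mul_comm, ← Nat.cast_mul, ← ht, ZMod.natCast_val, ZMod.cast_id]
    · rw [AddSubgroup.closure_le]
      intro x hx
      rw [Set.mem_singleton_iff] at hx
      subst hx
      have := gcd_cast_mem_closure m (fun j => (c j).val) Finset.univ
      rwa [hfun, Finset.coe_univ, Set.image_univ] at this
  rw [step1]
  have step2 : AddSubgroup.closure {((g : ℕ) : ZMod m)} = ⊤ ↔ Nat.Coprime g m := by
    constructor
    · intro h
      have h1 : (1 : ZMod m) ∈ AddSubgroup.closure {((g : ℕ) : ZMod m)} := by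
        rw [h]; trivial
      rw [AddSubgroup.mem_closure_singleton] at h1
      obtain ⟨z, hz⟩ := h1
      rw [zsmul_eq_mul] at hz
      rw [← ZMod.isUnit_iff_coprime]
      exact IsUnit.of_mul_eq_one _ (by rw [mul_comm]; exact hz)
    · intro h
      rw [← ZMod.isUnit_iff_coprime] at h
      obtain ⟨u, hu⟩ := h
      rw [eq_top_iff]
      intro x _
      rw [AddSubgroup.mem_closure_singleton]
      refine ⟨((x * ↑u⁻¹).val : ℤ), ?_⟩
      rw [zsmul_eq_mul]
      push_cast
      rw [ZMod.natCast_val, ZMod.cast_id]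
      rw [show ((g : ℕ) : ZMod m) = (u : ZMod m) from hu.symm]
      rw [mul_assoc]
      simp
  rw [step2]
  constructor
  · intro h q hq
    by_contra hall
    push_neg at hall
    have hqg : q ∣ g := Finset.dvd_gcd fun i _ => hall i
    have hqm : q ∣ m := Nat.dvd_of_mem_primeFactors hq
    have hd1 : q ∣ 1 := by
      have := Nat.dvd_gcd hqg hqm
      rwa [Nat.coprime_iff_gcd_eq_one.mp h] at this
    exact (Nat.Prime.one_lt (Nat.prime_of_mem_primeFactors hq)).ne' (Nat.dvd_one.mp hd1)
  · intro h
    rw [Nat.coprime_iff_gcd_eq_one]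
    by_contra hne
    obtain ⟨q, hq, hqd⟩ := Nat.exists_prime_and_dvd hne
    have hqg : q ∣ g := hqd.trans (Nat.gcd_dvd_left _ _)
    have hqm : q ∣ m := hqd.trans (Nat.gcd_dvd_right _ _)
    obtain ⟨i, hi⟩ := h q (Nat.mem_primeFactors.mpr ⟨hq, hqm, NeZero.ne m⟩)
    exact hi (hqg.trans (Finset.gcd_dvd (Finset.mem_univ i)))

namespace DihedralAux

open DihedralGroup

variable {m : ℕ}

/-- Pack a sign and a parameter into a dihedral group element. -/
def dmk : Bool → ZMod m → DihedralGroup m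
  | false, x => r x
  | true, x => sr x

/-- `DihedralGroup m` is `Bool × ZMod m`. -/
def dihedralEquiv : Bool × ZMod m ≃ DihedralGroup m where
  toFun p := dmk p.1 p.2
  invFun g := match g with
    | r a => (false, a)
    | sr a => (true, a)
  left_inv := by rintro ⟨(_ | _), x⟩ <;> rfl
  right_inv := by rintro (a | a) <;> rfl

/-- The subgroup of `DihedralGroup m` determined by an additive subgroup `A` and an offset. -/
def dsub (A : AddSubgroup (ZMod m)) (b0 : ZMod m) : Subgroup (DihedralGroup m) where
  carrier := {x | match x with | r a => a ∈ A | sr b => b - b0 ∈ A}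
  one_mem' := by
    show (0 : ZMod m) ∈ A
    exact A.zero_mem
  mul_mem' := by
    rintro (a | a) (b | b) ha hb
    · exact A.add_mem ha hb
    · show b - a - b0 ∈ A
      have : b - a - b0 = (b - b0) - a := by ring
      rw [this]
      exact A.sub_mem hb ha
    · show a + b - b0 ∈ A
      have : a + b - b0 = (a - b0) + b := by ring
      rw [this]
      exact A.add_mem ha hb
    · show b - a ∈ A
      have : b - a = (b - b0) - (a - b0) := by ring
      rw [this]
      exact A.sub_mem hb ha
  inv_mem' := by
    rintro (a | a) ha
    · exact A.neg_mem ha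
    · exact ha

/-- The rotation subgroup. -/
def rotSub : Subgroup (DihedralGroup m) where
  carrier := {x | match x with | r _ => True | sr _ => False}
  one_mem' := trivial
  mul_mem' := by rintro (a | a) (b | b) ha hb <;> trivial
  inv_mem' := by rintro (a | a) ha <;> trivial

lemma closure_ne_top_of_all_false {n : ℕ} (s : Fin n → Bool) (h : Fin n → ZMod m)
    (hs : ∀ i, s i = false) :
    Subgroup.closure (Set.range fun i => dmk (s i) (h i)) ≠ ⊤ := by
  intro htop
  have hle : Subgroup.closure (Set.range fun i => dmk (s i) (h i)) ≤ rotSub := by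
    rw [Subgroup.closure_le]
    rintro _ ⟨i, rfl⟩
    show dmk (s i) (h i) ∈ rotSub
    rw [hs i]
    trivial
  rw [htop] at hle
  exact hle (Subgroup.mem_top (sr 0))

lemma closure_top_iff [NeZero m] {n : ℕ} (s : Fin n → Bool) (h : Fin n → ZMod m)
    (i0 : Fin n) (hi0 : s i0 = true) :
    Subgroup.closure (Set.range fun i => dmk (s i) (h i)) = ⊤ ↔
      AddSubgroup.closure
        ((fun i => if s i = true then h i - h i0 else h i) '' {i | i ≠ i0}) = ⊤ := by
  set A := AddSubgroup.closure
    ((fun i => if s i = true then h i - h i0 else h i) '' {i | i ≠ i0}) with hA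
  set H := Subgroup.closure (Set.range fun i => dmk (s i) (h i)) with hH
  constructor
  · intro htop
    by_contra hAne
    obtain ⟨x, hx⟩ : ∃ x, x ∉ A := by
      by_contra hall
      push_neg at hall
      exact hAne ((AddSubgroup.eq_top_iff' A).mpr hall)
    have hle : H ≤ dsub A (h i0) := by
      rw [hH, Subgroup.closure_le]
      rintro _ ⟨i, rfl⟩
      show dmk (s i) (h i) ∈ dsub A (h i0)
      rcases hsi : s i with _ | _
      · show h i ∈ A
        rcases eq_or_ne i i0 with rfl | hne
        · rw [hi0] at hsi; exact absurd hsi (by simp)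
        · exact AddSubgroup.subset_closure ⟨i, hne, by simp [hsi]⟩
      · show h i - h i0 ∈ A
        rcases eq_or_ne i i0 with rfl | hne
        · rw [sub_self]; exact A.zero_mem
        · exact AddSubgroup.subset_closure ⟨i, hne, by simp [hsi]⟩
    rw [htop] at hle
    exact hx (hle (Subgroup.mem_top (r x)))
  · intro hAtop
    -- all rotations with parameter in A are in H; then A = ⊤ gives everything
    have hsr0 : sr (h i0) ∈ H := by
      apply Subgroup.subset_closure
      exact ⟨i0, by show dmk (s i0) (h i0) = sr (h i0); rw [hi0]; rfl⟩
    have hrmem : ∀ x : ZMod m, r x ∈ H := by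
      have hle : A ≤ {
          carrier := {x : ZMod m | r x ∈ H}
          zero_mem' := by
            show r 0 ∈ H
            exact (one_def (n := m)) ▸ H.one_mem
          add_mem' := by
            intro a b ha hb
            show r (a + b) ∈ H
            rw [← r_mul_r]
            exact H.mul_mem ha hb
          neg_mem' := by
            intro a ha
            show r (-a) ∈ H
            have : r (-a) = (r a)⁻¹ := rfl
            rw [this]
            exact H.inv_mem ha : AddSubgroup (ZMod m)} := by
        rw [hA, AddSubgroup.closure_le]
        rintro _ ⟨i, hine, rfl⟩
        show r (if s i = true then h i - h i0 else h i) ∈ H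
        rcases hsi : s i with _ | _
        · rw [if_neg (by simp)]
          exact Subgroup.subset_closure ⟨i, by show dmk (s i) (h i) = r (h i); rw [hsi]; rfl⟩
        · rw [if_pos rfl]
          have hsri : sr (h i) ∈ H :=
            Subgroup.subset_closure ⟨i, by show dmk (s i) (h i) = sr (h i); rw [hsi]; rfl⟩
          have : r (h i - h i0) = sr (h i0) * sr (h i) := by rw [sr_mul_sr]
          rw [this]
          exact H.mul_mem hsr0 hsri
      intro x
      have : x ∈ A := by rw [hAtop]; trivial
      exact hle this
    rw [eq_top_iff]
    rintro (a | a) _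
    · exact hrmem a
    · have : sr a = r (h i0 - a) * sr (h i0) := by rw [r_mul_sr]; congr 1; ring
      rw [this]
      exact H.mul_mem (hrmem _) hsr0

end DihedralAux

namespace DihedralAux

/-- subtype of a product as a sigma type. -/
def subtypeProdSigma {α β : Type*} (P : α × β → Prop) :
    {p : α × β // P p} ≃ Σ a : α, {b : β // P (a, b)} where
  toFun x := ⟨x.1.1, x.1.2, by exact x.2⟩
  invFun x := ⟨(x.1, x.2.1), x.2.2⟩
  left_inv := fun ⟨⟨a, b⟩, h⟩ => rfl
  right_inv := fun ⟨a, b, h⟩ => rfl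

/-- subtype of a product with condition on the second factor. -/
def prodSubtypeSnd {α β : Type*} (Q : β → Prop) : {p : α × β // Q p.2} ≃ α × {b : β // Q b} where
  toFun x := (x.1.1, ⟨x.1.2, x.2⟩)
  invFun y := ⟨(y.1, y.2.1), y.2.2⟩
  left_inv := fun ⟨⟨a, b⟩, h⟩ => rfl
  right_inv := fun ⟨a, b, h⟩ => rfl

/-- The translation bijection. -/
def translEquiv {m n : ℕ} (s : Fin n → Bool) (i0 : Fin n) :
    (Fin n → ZMod m) ≃ (Fin n → ZMod m) where
  toFun h i := if s i = true ∧ i ≠ i0 then h i - h i0 else h i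
  invFun g i := if s i = true ∧ i ≠ i0 then g i + g i0 else g i
  left_inv h := by
    funext i
    show (if s i = true ∧ i ≠ i0 then
        (if s i = true ∧ i ≠ i0 then h i - h i0 else h i) +
          (if s i0 = true ∧ i0 ≠ i0 then h i0 - h i0 else h i0)
      else (if s i = true ∧ i ≠ i0 then h i - h i0 else h i)) = h i
    have hi0f : ¬(s i0 = true ∧ i0 ≠ i0) := fun hh => hh.2 rfl
    by_cases hc : s i = true ∧ i ≠ i0
    · simp only [if_pos hc, if_neg hi0f]
      abel
    · simp only [if_neg hc]
  right_inv g := by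
    funext i
    show (if s i = true ∧ i ≠ i0 then
        (if s i = true ∧ i ≠ i0 then g i + g i0 else g i) -
          (if s i0 = true ∧ i0 ≠ i0 then g i0 + g i0 else g i0)
      else (if s i = true ∧ i ≠ i0 then g i + g i0 else g i)) = g i
    have hi0f : ¬(s i0 = true ∧ i0 ≠ i0) := fun hh => hh.2 rfl
    by_cases hc : s i = true ∧ i ≠ i0
    · simp only [if_pos hc, if_neg hi0f]
      abel
    · simp only [if_neg hc]

lemma card_reindex {ι ι' : Type*} (e : ι ≃ ι') (m : ℕ) :
    Nat.card {c : ι → ZMod m // ZModCond m c} = Nat.card {c : ι' → ZMod m // ZModCond m c} := by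
  refine Nat.card_congr (Equiv.subtypeEquiv (Equiv.arrowCongr e (Equiv.refl _)) fun c => ?_)
  constructor
  · rintro hc q hq
    obtain ⟨i, hi⟩ := hc q hq
    exact ⟨e i, by simpa using hi⟩
  · rintro hc q hq
    obtain ⟨j, hj⟩ := hc q hq
    exact ⟨e.symm j, by simpa using hj⟩

end DihedralAux

open DihedralAux

/-- The number of surjective homomorphisms from the free group `F_n` onto the dihedral
group `D_{2m}` of order `2m` is `(2^n - 1) ⬝ m^n ⬝ ∏_{q prime, q ∣ m} (1 - q^{1-n})`. -/
theorem card_epi_freeGroup_dihedral (n m : ℕ) (hn : 1 ≤ n) (hm : 1 ≤ m) :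
    (Nat.card {ρ : FreeGroup (Fin n) →* DihedralGroup m // Function.Surjective ρ} : ℚ) =
      ((2 : ℚ) ^ n - 1) * (m : ℚ) ^ n *
        ∏ q ∈ m.primeFactors, (1 - (q : ℚ) ^ ((1 : ℤ) - (n : ℤ))) := by
  classical
  haveI : NeZero m := ⟨by omega⟩
  -- Step 0 : surjective homomorphisms correspond to generating tuples
  have h0 : Nat.card {ρ : FreeGroup (Fin n) →* DihedralGroup m // Function.Surjective ρ}
      = Nat.card {f : Fin n → DihedralGroup m // Subgroup.closure (Set.range f) = ⊤} := by
    refine (Nat.card_congr (Equiv.subtypeEquiv FreeGroup.lift fun f => ?_)).symm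
    rw [← MonoidHom.range_eq_top, FreeGroup.range_lift_eq_closure]
  -- Step 1 : tuples correspond to pairs (signs, parameters)
  set E : ((Fin n → Bool) × (Fin n → ZMod m)) ≃ (Fin n → DihedralGroup m) :=
    (Equiv.arrowProdEquivProdArrow _ _ _).symm.trans
      (Equiv.arrowCongr (Equiv.refl _) dihedralEquiv) with hE
  have h1 : Nat.card {f : Fin n → DihedralGroup m // Subgroup.closure (Set.range f) = ⊤}
      = Nat.card {p : (Fin n → Bool) × (Fin n → ZMod m) //
          Subgroup.closure (Set.range fun i => dmk (p.1 i) (p.2 i)) = ⊤} :=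
    (Nat.card_congr (Equiv.subtypeEquiv E fun p => Iff.rfl)).symm
  -- Step 2 : sigma decomposition over the sign vector
  have h2 : Nat.card {p : (Fin n → Bool) × (Fin n → ZMod m) //
        Subgroup.closure (Set.range fun i => dmk (p.1 i) (p.2 i)) = ⊤}
      = ∑ s : Fin n → Bool, Nat.card {h : Fin n → ZMod m //
          Subgroup.closure (Set.range fun i => dmk (s i) (h i)) = ⊤} := by
    rw [Nat.card_congr (subtypeProdSigma _), Nat.card_eq_fintype_card, Fintype.card_sigma]
    refine Finset.sum_congr rfl fun s _ => ?_
    rw [Nat.card_eq_fintype_card]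
  -- the count for a fixed admissible sign vector
  set NN := Nat.card {c : Fin (n - 1) → ZMod m // ZModCond m c} with hNN
  have hper : ∀ s : Fin n → Bool, s ≠ (fun _ => false) →
      Nat.card {h : Fin n → ZMod m //
        Subgroup.closure (Set.range fun i => dmk (s i) (h i)) = ⊤} = m * NN := by
    intro s hs
    obtain ⟨i0, hi0⟩ : ∃ i0, s i0 = true := by
      by_contra hall
      push_neg at hall
      refine hs (funext fun i => ?_)
      have := hall i
      revert this
      cases s i <;> simp
    rw [Nat.card_congr (Equiv.subtypeEquivRight fun h => closure_top_iff s h i0 hi0)]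
    have himg : ∀ h : Fin n → ZMod m,
        ((fun i => if s i = true then h i - h i0 else h i) '' {i | i ≠ i0})
          = ((translEquiv s i0 h) '' {i | i ≠ i0}) := by
      intro h
      refine Set.image_congr fun i hi => ?_
      show _ = (if s i = true ∧ i ≠ i0 then h i - h i0 else h i)
      by_cases hsi : s i = true
      · rw [if_pos hsi, if_pos ⟨hsi, hi⟩]
      · rw [if_neg hsi, if_neg fun hc => hsi hc.1]
    have step1 : Nat.card {h : Fin n → ZMod m // AddSubgroup.closure
          ((fun i => if s i = true then h i - h i0 else h i) '' {i | i ≠ i0}) = ⊤}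
        = Nat.card {g : Fin n → ZMod m //
            AddSubgroup.closure (g '' {i | i ≠ i0}) = ⊤} :=
      Nat.card_congr (Equiv.subtypeEquiv (translEquiv s i0) fun h =>
        Iff.of_eq (by rw [himg h]))
    have hsplit : ∀ g : Fin n → ZMod m,
        (AddSubgroup.closure (g '' {i | i ≠ i0}) = ⊤) ↔
          AddSubgroup.closure (Set.range ((Equiv.funSplitAt i0 (ZMod m)) g).2) = ⊤ := by
      intro g
      rw [Set.image_eq_range g {i | i ≠ i0}]
      exact Iff.rfl
    have step2 : Nat.card {g : Fin n → ZMod m //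
          AddSubgroup.closure (g '' {i | i ≠ i0}) = ⊤}
        = Nat.card {p : ZMod m × ({j : Fin n // j ≠ i0} → ZMod m) //
            AddSubgroup.closure (Set.range p.2) = ⊤} :=
      Nat.card_congr (Equiv.subtypeEquiv (Equiv.funSplitAt i0 (ZMod m)) hsplit)
    have e3 : {p : ZMod m × ({j : Fin n // j ≠ i0} → ZMod m) //
          AddSubgroup.closure (Set.range p.2) = ⊤}
        ≃ ZMod m × {c : {j : Fin n // j ≠ i0} → ZMod m //
            AddSubgroup.closure (Set.range c) = ⊤} :=
      prodSubtypeSnd (fun c => AddSubgroup.closure (Set.range c) = ⊤)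
    rw [step1, step2, Nat.card_congr e3, Nat.card_prod, Nat.card_zmod]
    congr 1
    rw [Nat.card_congr (Equiv.subtypeEquivRight fun c =>
      closure_eq_top_iff_zmodCond m c)]
    have hcard : Fintype.card {j : Fin n // j ≠ i0} = n - 1 := by
      have : Fintype.card {j : Fin n // j ≠ i0} = Fintype.card (Fin n) - 1 := by
        rw [← Fintype.card_subtype_eq i0]
        exact Fintype.card_subtype_compl _
      rw [this, Fintype.card_fin]
    rw [hNN]
    exact card_reindex (Fintype.equivFinOfCardEq hcard) m
  have hzero : Nat.card {h : Fin n → ZMod m //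
      Subgroup.closure (Set.range fun i => dmk ((fun _ : Fin n => false) i) (h i)) = ⊤} = 0 := by
    haveI : IsEmpty {h : Fin n → ZMod m //
        Subgroup.closure (Set.range fun i => dmk ((fun _ : Fin n => false) i) (h i)) = ⊤} :=
      ⟨fun ⟨h, hh⟩ => closure_ne_top_of_all_false _ h (fun _ => rfl) hh⟩
    exact Nat.card_of_isEmpty
  -- evaluate the sum
  have hsum : (∑ s : Fin n → Bool, Nat.card {h : Fin n → ZMod m //
        Subgroup.closure (Set.range fun i => dmk (s i) (h i)) = ⊤})
      = (2 ^ n - 1) * (m * NN) := by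
    have hstep : ∀ s : Fin n → Bool, Nat.card {h : Fin n → ZMod m //
          Subgroup.closure (Set.range fun i => dmk (s i) (h i)) = ⊤}
        = if s = (fun _ => false) then 0 else m * NN := by
      intro s
      by_cases hs : s = (fun _ => false)
      · rw [if_pos hs, hs]
        exact hzero
      · rw [if_neg hs]
        exact hper s hs
    rw [Finset.sum_congr rfl fun s _ => hstep s, Finset.sum_ite, Finset.sum_const_zero,
      Finset.sum_const, zero_add, smul_eq_mul]
    congr 1
    have : (Finset.univ.filter fun s : Fin n → Bool => ¬ s = fun _ => false)
        = Finset.univ.erase (fun _ => false) := by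
      ext s
      simp [Finset.mem_erase, and_comm]
    rw [this, Finset.card_erase_of_mem (Finset.mem_univ _), Finset.card_univ,
      Fintype.card_fun, Fintype.card_bool, Fintype.card_fin]
  rw [h0, h1, h2, hsum]
  have h2n : 1 ≤ 2 ^ n := Nat.one_le_two_pow
  rw [Nat.cast_mul, Nat.cast_sub h2n, Nat.cast_mul, hNN,
    zmod_count (Fin (n - 1)) m (NeZero.ne m), Fintype.card_fin]
  have hprod : (∏ q ∈ m.primeFactors, (1 - (q : ℚ) ^ (-((n - 1 : ℕ) : ℤ))))
      = ∏ q ∈ m.primeFactors, (1 - (q : ℚ) ^ ((1 : ℤ) - (n : ℤ))) := by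
    refine Finset.prod_congr rfl fun q _ => ?_
    congr 1
    congr 1
    push_cast [Nat.cast_sub hn]
    ring
  rw [hprod]
  have hmn : (m : ℚ) * (m : ℚ) ^ (n - 1) = (m : ℚ) ^ n := by
    rw [← pow_succ']
    congr 1
    exact Nat.sub_add_cancel hn
  push_cast
  rw [← hmn]
  ring
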